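/- Let n ≥ 1 and let a_1,…,a_n, b_1,…,b_n ∈ (0,1] with ε > 0 such that min(a_i, b_i) > ε for all i. Suppose |a_i - b_i| ≤ δ for all i, where δ < min_i min(a_i, b_i). Then the geometric means A = (∏ a_i)^{1/n} and B = (∏ b_i)^{1/n} satisfy |A - B| ≤ (7/4)·(A/ε)·δ. -/

import Mathlib

private lemma gm_aux (n : ℕ) (hn : 1 ≤ n) (t : ℝ) (ht : 0 ≤ t) (P Q : ℝ)
    (hP : 0 < P) (hQ : 0 < Q) (h : Q ≤ (1 + t) ^ n * P) :
    Q ^ ((1:ℝ)/n) ≤ (1 + t) * P ^ ((1:ℝ)/n) := by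
  have h1t : (0:ℝ) ≤ 1 + t := by linarith
  have hne : (n:ℝ) ≠ 0 := Nat.cast_ne_zero.mpr (by omega)
  have := Real.rpow_le_rpow hQ.le h (by positivity : (0:ℝ) ≤ 1/n)
  calc Q ^ ((1:ℝ)/n) ≤ ((1 + t) ^ n * P) ^ ((1:ℝ)/n) := this
    _ = (1 + t) * P ^ ((1:ℝ)/n) := by
        rw [Real.mul_rpow (by positivity) hP.le, ← Real.rpow_natCast (1+t) n,
          ← Real.rpow_mul h1t]
        rw [show (n:ℝ) * (1/n) = 1 by field_simp, Real.rpow_one]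

/-- Non-asymptotic bound for geometric means: if `a i, b i ∈ (0,1]`, `min (a i) (b i) > ε > 0`,
`|a i - b i| ≤ δ` for all `i`, and `δ < min_i min (a i) (b i)`, then the geometric means
`A = (∏ a i)^(1/n)` and `B = (∏ b i)^(1/n)` satisfy `|A - B| ≤ (7/4)·(A/ε)·δ`. -/
theorem geometric_mean_dev_bound (n : ℕ) (hn : 1 ≤ n) (a b : Fin n → ℝ) (ε δ : ℝ)
    (hε : 0 < ε)
    (ha : ∀ i, a i ∈ Set.Ioc (0 : ℝ) 1) (hb : ∀ i, b i ∈ Set.Ioc (0 : ℝ) 1)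
    (hmin : ∀ i, ε < min (a i) (b i))
    (hδ : ∀ i, |a i - b i| ≤ δ)
    (hδlt : ∀ i, δ < min (a i) (b i)) :
    |(∏ i, a i) ^ ((1 : ℝ) / n) - (∏ i, b i) ^ ((1 : ℝ) / n)| ≤
      (7 / 4) * ((∏ i, a i) ^ ((1 : ℝ) / n) / ε) * δ := by
  have i0 : Fin n := ⟨0, by omega⟩
  have hδ0 : 0 ≤ δ := le_trans (abs_nonneg _) (hδ i0)
  set t := δ / ε with htdef
  have ht : 0 ≤ t := div_nonneg hδ0 hε.le
  have hP : 0 < ∏ i, a i := Finset.prod_pos fun i _ => (ha i).1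
  have hQ : 0 < ∏ i, b i := Finset.prod_pos fun i _ => (hb i).1
  set A := (∏ i, a i) ^ ((1:ℝ)/n) with hAdef
  set B := (∏ i, b i) ^ ((1:ℝ)/n) with hBdef
  have hA0 : 0 < A := Real.rpow_pos_of_pos hP _
  have hB0 : 0 < B := Real.rpow_pos_of_pos hQ _
  -- pointwise bounds
  have key : ∀ (x y : Fin n → ℝ), (∀ i, 0 < x i) → (∀ i, ε ≤ x i) →
      (∀ i, 0 < y i) → (∀ i, y i ≤ x i + δ) →
      (∏ i, y i) ≤ (1 + t) ^ n * ∏ i, x i := by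
    intro x y hx hxε hy hyx
    have : (∏ i, y i) ≤ ∏ i, (1 + t) * x i := by
      apply Finset.prod_le_prod (fun i _ => (hy i).le)
      intro i _
      have : δ ≤ t * x i := by
        rw [htdef]
        rw [div_mul_eq_mul_div, le_div_iff₀ hε] at *
        nlinarith [hxε i, hx i]
      nlinarith [hyx i, hx i]
    calc (∏ i, y i) ≤ ∏ i, (1 + t) * x i := this
      _ = (1 + t) ^ n * ∏ i, x i := by
          rw [Finset.prod_mul_distrib, Finset.prod_const, Finset.card_univ, Fintype.card_fin]
  have hεa : ∀ i, ε ≤ a i := fun i => le_of_lt (lt_of_lt_of_le (hmin i) (min_le_left _ _))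
  have hεb : ∀ i, ε ≤ b i := fun i => le_of_lt (lt_of_lt_of_le (hmin i) (min_le_right _ _))
  have hQP : (∏ i, b i) ≤ (1 + t) ^ n * ∏ i, a i :=
    key a b (fun i => (ha i).1) hεa (fun i => (hb i).1)
      (fun i => by have := abs_le.mp (hδ i); linarith [this.1])
  have hPQ : (∏ i, a i) ≤ (1 + t) ^ n * ∏ i, b i :=
    key b a (fun i => (hb i).1) hεb (fun i => (ha i).1)
      (fun i => by have := abs_le.mp (hδ i); linarith [this.2])
  have hBA : B ≤ (1 + t) * A := gm_aux n hn t ht _ _ hP hQ hQP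
  have hAB : A ≤ (1 + t) * B := gm_aux n hn t ht _ _ hQ hP hPQ
  have habs : |A - B| ≤ t * A := by
    rw [abs_sub_le_iff]
    constructor
    · rcases le_or_gt B A with h | h
      · nlinarith
      · nlinarith
    · nlinarith
  have : t * A = A / ε * δ := by rw [htdef]; field_simp
  nlinarith [mul_nonneg ht hA0.le, mul_nonneg (div_nonneg hA0.le hε.le) hδ0]
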